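/- Consider the $6\times 6$ symmetric matrix $\mathcal{M}$ over the commutative ring $R = \mathbb{C}[b_{11}, b_{12}, b_{22}, b_{33}, b_{34}, b_{44}, Q]$ given (in the ordering of the paper's formula (13)) with entries: rows/columns 1,2,4,5 containing the products $b_{ij}b_{kl}$ and $Q \mp b_{12}b_{34}$ as in the paper, and rows/columns 3,6 equal to $\mathrm{diag\text{-}block}\begin{pmatrix} Q_1 & Q \\ Q & Q_2 \end{pmatrix}$ where $Q_1 = b_{11}b_{22} - b_{12}^2$ and $Q_2 = b_{33}b_{44} - b_{34}^2$. Then $Q_1 Q_2 - Q^2$ divides $\det \mathcal{M}$ in $R$. -/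

import Mathlib

open MvPolynomial

set_option maxRecDepth 2000 in
set_option maxHeartbeats 1600000 in
theorem det4z {α : Type*} [CommRing α] (a b c d e f g j k l : α) :
    Matrix.det !![a, b, c, d; b, e, f, g; c, f, j, k; d, g, k, l] =
      a*e*j*l - a*e*k*k - a*f*f*l + 2*a*f*g*k - a*g*g*j
      - b*b*j*l + b*b*k*k + 2*b*c*f*l - 2*b*c*g*k - 2*b*d*f*k + 2*b*d*g*j
      - c*c*e*l + c*c*g*g + 2*c*d*e*k - 2*c*d*f*g - d*d*e*j + d*d*f*f := by
  rw [Matrix.det_succ_row_zero]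
  simp [Fin.sum_univ_succ, Matrix.det_fin_three, Fin.succAbove, Fin.castSucc,
    Fin.castAdd, Fin.castLE]
  ring

def e6 : (Fin 4 ⊕ Fin 2) ≃ Fin 6 :=
  ⟨Sum.elim ![0, 1, 3, 4] ![2, 5],
   ![Sum.inl 0, Sum.inl 1, Sum.inr 0, Sum.inl 2, Sum.inl 3, Sum.inr 1],
   by decide, by decide⟩

set_option maxRecDepth 2000 in
set_option maxHeartbeats 1600000 in
theorem det6z {α : Type*} [CommRing α] (a b c d e f g h i j k l m : α) :
    Matrix.det !![a, b, 0, c, d, 0;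
                  b, e, 0, f, g, 0;
                  0, 0, h, 0, 0, i;
                  c, f, 0, j, k, 0;
                  d, g, 0, k, l, 0;
                  0, 0, i, 0, 0, m] =
    (h*m - i*i) * (a*e*j*l - a*e*k*k - a*f*f*l + 2*a*f*g*k - a*g*g*j
      - b*b*j*l + b*b*k*k + 2*b*c*f*l - 2*b*c*g*k - 2*b*d*f*k + 2*b*d*g*j
      - c*c*e*l + c*c*g*g + 2*c*d*e*k - 2*c*d*f*g - d*d*e*j + d*d*f*f) := by
  rw [← Matrix.det_submatrix_equiv_self e6]
  have hsub :
      (!![a, b, 0, c, d, 0;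
          b, e, 0, f, g, 0;
          0, 0, h, 0, 0, i;
          c, f, 0, j, k, 0;
          d, g, 0, k, l, 0;
          0, 0, i, 0, 0, m] : Matrix (Fin 6) (Fin 6) α).submatrix e6 e6 =
        Matrix.fromBlocks !![a, b, c, d; b, e, f, g; c, f, j, k; d, g, k, l]
          0 0 !![h, i; i, m] := by
    ext u v
    rcases u with u | u <;> rcases v with v | v <;> fin_cases u <;> fin_cases v <;> rfl
  rw [hsub, Matrix.det_fromBlocks_zero₂₁, det4z, Matrix.det_fin_two_of]
  ring

set_option maxRecDepth 2000 in
set_option maxHeartbeats 1600000 in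
/-- the quadratic `Q₁Q₂ - Q²` divides the determinant of the 6×6 symmetric
matrix (13) of the paper, over `ℂ[b₁₁,b₁₂,b₂₂,b₃₃,b₃₄,b₄₄,Q]`. -/
theorem stmt13 :
    let R := MvPolynomial (Fin 7) ℂ
    let b11 : R := X 0; let b12 : R := X 1; let b22 : R := X 2
    let b33 : R := X 3; let b34 : R := X 4; let b44 : R := X 5
    let q : R := X 6
    let Q1 : R := b11 * b22 - b12 ^ 2
    let Q2 : R := b33 * b44 - b34 ^ 2
    let M : Matrix (Fin 6) (Fin 6) R :=
      !![b22 * b33, -(b12 * b33), 0, q - b12 * b34, -(b22 * b34), 0;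
         -(b12 * b33), b11 * b33, 0, b11 * b34, q + b12 * b34, 0;
         0, 0, Q1, 0, 0, q;
         q - b12 * b34, b11 * b34, 0, b11 * b44, b12 * b44, 0;
         -(b22 * b34), q + b12 * b34, 0, b12 * b44, b22 * b44, 0;
         0, 0, q, 0, 0, Q2]
    (Q1 * Q2 - q ^ 2) ∣ M.det := by
  intro R b11 b12 b22 b33 b34 b44 q Q1 Q2 M
  refine ⟨(Q1 * Q2 - q ^ 2) ^ 2, ?_⟩
  have h := det6z (α := R) (b22*b33) (-(b12*b33)) (q - b12*b34) (-(b22*b34))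
    (b11*b33) (b11*b34) (q + b12*b34) Q1 q (b11*b44) (b12*b44) (b22*b44) Q2
  have hM : M =
      !![b22 * b33, -(b12 * b33), 0, q - b12 * b34, -(b22 * b34), 0;
         -(b12 * b33), b11 * b33, 0, b11 * b34, q + b12 * b34, 0;
         0, 0, Q1, 0, 0, q;
         q - b12 * b34, b11 * b34, 0, b11 * b44, b12 * b44, 0;
         -(b22 * b34), q + b12 * b34, 0, b12 * b44, b22 * b44, 0;
         0, 0, q, 0, 0, Q2] := rfl
  rw [hM, h, show Q1 = b11 * b22 - b12 ^ 2 from rfl, show Q2 = b33 * b44 - b34 ^ 2 from rfl]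
  ring
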